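/- Let α : E → (Fin N → ℝ) be continuous and define f(y) = ∏_{i=0}^{N−2} (sorted(α(y))(i+1) − sorted(α(y))(i)) and s(y) = sign of the sorting permutation when α(y) is injective. Then the function Ψ(y) = s(y) · f(y) (defined to be 0 when α(y) is not injective) is continuous on E. -/

import Mathlib

open Filter Topology

/-- If `x` has a collision pair of indices, some consecutive sorted gap is at most
the distance between the colliding values. -/
lemma sortlet_gap_exists {N : ℕ} (x : Fin (N + 1) → ℝ) (a b : Fin (N + 1)) (hne : a ≠ b) :
    ∃ i : Fin N, (x ∘ Tuple.sort x) i.succ - (x ∘ Tuple.sort x) i.castSucc ≤ |x a - x b| := by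
  set σ := Tuple.sort x with hσ
  have hmono : Monotone (x ∘ σ) := Tuple.monotone_sort x
  have aux : ∀ a b : Fin (N + 1), σ.symm a < σ.symm b →
      ∃ i : Fin N, (x ∘ σ) i.succ - (x ∘ σ) i.castSucc ≤ x b - x a := by
    intro a b hpq
    have hp : (σ.symm a : ℕ) < N := by
      have h1 : (σ.symm a : ℕ) < (σ.symm b : ℕ) := hpq
      have h2 : (σ.symm b : ℕ) < N + 1 := (σ.symm b).isLt
      omega
    refine ⟨⟨(σ.symm a : ℕ), hp⟩, ?_⟩
    have hc : (⟨(σ.symm a : ℕ), hp⟩ : Fin N).castSucc = σ.symm a := by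
      ext; simp
    have h1 : (x ∘ σ) (⟨(σ.symm a : ℕ), hp⟩ : Fin N).castSucc = x a := by
      rw [hc]; simp
    have h2 : (x ∘ σ) (⟨(σ.symm a : ℕ), hp⟩ : Fin N).succ ≤ x b := by
      have hle : (⟨(σ.symm a : ℕ), hp⟩ : Fin N).succ ≤ σ.symm b := by
        have h1 : (σ.symm a : ℕ) < (σ.symm b : ℕ) := hpq
        simp only [Fin.le_def, Fin.val_succ]
        omega
      have := hmono hle
      simpa using this
    rw [h1]
    linarith
  rcases lt_or_gt_of_ne (show σ.symm a ≠ σ.symm b from fun h => hne (by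
      simpa using congrArg σ h)) with hpq | hpq
  · obtain ⟨i, hi⟩ := aux a b hpq
    exact ⟨i, hi.trans ((abs_sub_comm (x a) (x b) ▸ le_abs_self _ : x b - x a ≤ |x a - x b|))⟩
  · obtain ⟨i, hi⟩ := aux b a hpq
    exact ⟨i, hi.trans (le_abs_self _)⟩

theorem sortlet_continuous {E : Type*} [TopologicalSpace E] {N : ℕ}
    (α : E → Fin (N + 1) → ℝ) (hα : Continuous α)
    (Ψ : E → ℝ)
    (hΨ : ∀ y, Ψ y =
      if Function.Injective (α y) then
        ((Equiv.Perm.sign (Tuple.sort (α y)) : ℤ) : ℝ) *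
          ∏ i : Fin N, ((α y ∘ Tuple.sort (α y)) i.succ -
            (α y ∘ Tuple.sort (α y)) i.castSucc)
      else 0) :
    Continuous Ψ := by
  rw [continuous_iff_continuousAt]
  intro y
  by_cases hinj : Function.Injective (α y)
  · -- around an injective point the sorting permutation is locally constant
    set σ := Tuple.sort (α y) with hσ
    have hsm : StrictMono (α y ∘ σ) :=
      (Tuple.monotone_sort (α y)).strictMono_of_injective (hinj.comp σ.injective)
    set U : Set E := {y' | ∀ i : Fin N, (α y' ∘ σ) i.castSucc < (α y' ∘ σ) i.succ} with hU
    have hUopen : IsOpen U := by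
      rw [hU, Set.setOf_forall]
      exact isOpen_iInter_of_finite fun i =>
        isOpen_lt ((continuous_apply _).comp hα) ((continuous_apply _).comp hα)
    have hyU : y ∈ U := fun i => hsm (Fin.castSucc_lt_succ (i := i))
    have key : ∀ y' ∈ U, Ψ y' = ((Equiv.Perm.sign σ : ℤ) : ℝ) *
        ∏ i : Fin N, ((α y' ∘ σ) i.succ - (α y' ∘ σ) i.castSucc) := by
      intro y' hy'
      have hsm' : StrictMono (α y' ∘ σ) := Fin.strictMono_iff_lt_succ.mpr hy'
      have hinj' : Function.Injective (α y') := by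
        intro c d hcd
        have : (α y' ∘ σ) (σ.symm c) = (α y' ∘ σ) (σ.symm d) := by simpa using hcd
        have := hsm'.injective this
        simpa using congrArg σ this
      have hcomp : α y' ∘ σ = α y' ∘ Tuple.sort (α y') :=
        Tuple.comp_sort_eq_comp_iff_monotone.mpr hsm'.monotone
      have hsort : Tuple.sort (α y') = σ :=
        Equiv.ext fun i => (hinj' (congrFun hcomp i)).symm
      rw [hΨ y', if_pos hinj', hsort]
    have hc : ContinuousAt (fun y' => ((Equiv.Perm.sign σ : ℤ) : ℝ) *
        ∏ i : Fin N, ((α y' ∘ σ) i.succ - (α y' ∘ σ) i.castSucc)) y :=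
      (continuous_const.mul (continuous_finset_prod _ fun i _ =>
        ((continuous_apply _).comp hα).sub ((continuous_apply _).comp hα))).continuousAt
    exact hc.congr (Filter.eventually_of_mem (hUopen.mem_nhds hyU)
      fun y' h => (key y' h).symm)
  · -- at a collision point, squeeze to zero
    obtain ⟨a, b, hab, hne⟩ : ∃ a b, α y a = α y b ∧ a ≠ b := by
      simp only [Function.Injective, not_forall] at hinj
      obtain ⟨a, b, h1, h2⟩ := hinj
      exact ⟨a, b, h1, h2⟩
    have hΨy : Ψ y = 0 := by rw [hΨ y, if_neg hinj]
    rw [ContinuousAt, hΨy]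
    set C : ℝ := 2 * ‖α y‖ + 2 with hC
    have hC0 : 0 ≤ C := by positivity
    -- eventually every coordinate is ≤ ‖α y‖ + 1 in absolute value
    have hev : ∀ᶠ y' in 𝓝 y, ∀ k, |α y' k| ≤ ‖α y‖ + 1 := by
      rw [Filter.eventually_all]
      intro k
      have ht : Filter.Tendsto (fun y' => α y' k) (𝓝 y) (𝓝 (α y k)) :=
        ((continuous_apply k).comp hα).continuousAt
      have : ∀ᶠ y' in 𝓝 y, |α y' k - α y k| < 1 := by
        have := Metric.tendsto_nhds.mp ht 1 one_pos
        filter_upwards [this] with y' h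
        rwa [Real.dist_eq] at h
      filter_upwards [this] with y' h
      have hk : |α y k| ≤ ‖α y‖ := by
        simpa using norm_le_pi_norm (α y) k
      calc |α y' k| = |(α y' k - α y k) + α y k| := by ring_nf
        _ ≤ |α y' k - α y k| + |α y k| := abs_add_le _ _
        _ ≤ ‖α y‖ + 1 := by linarith
    have hbound : ∀ᶠ y' in 𝓝 y, |Ψ y'| ≤ |α y' a - α y' b| * C ^ (N - 1) := by
      filter_upwards [hev] with y' hk
      by_cases hinj' : Function.Injective (α y')
      · have hmono : Monotone (α y' ∘ Tuple.sort (α y')) := Tuple.monotone_sort (α y')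
        have hgap0 : ∀ i : Fin N, 0 ≤ (α y' ∘ Tuple.sort (α y')) i.succ -
            (α y' ∘ Tuple.sort (α y')) i.castSucc := fun i =>
          sub_nonneg.mpr (hmono (Fin.castSucc_lt_succ (i := i)).le)
        have hgapC : ∀ i : Fin N, (α y' ∘ Tuple.sort (α y')) i.succ -
            (α y' ∘ Tuple.sort (α y')) i.castSucc ≤ C := by
          intro i
          have h1 : |(α y' ∘ Tuple.sort (α y')) i.succ| ≤ ‖α y‖ + 1 := hk _
          have h2 : |(α y' ∘ Tuple.sort (α y')) i.castSucc| ≤ ‖α y‖ + 1 := hk _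
          rw [abs_le] at h1 h2
          rw [hC]; linarith
      -- pick a gap bounded by the collision distance
        obtain ⟨i, hi⟩ := sortlet_gap_exists (α y') a b hne
        rw [hΨ y', if_pos hinj', abs_mul]
        have hsign : |((Equiv.Perm.sign (Tuple.sort (α y')) : ℤ) : ℝ)| = 1 := by
          rcases Int.units_eq_one_or (Equiv.Perm.sign (Tuple.sort (α y'))) with h | h <;>
            rw [h] <;> norm_num
        rw [hsign, one_mul, abs_of_nonneg (Finset.prod_nonneg fun i _ => hgap0 i)]
        rw [Finset.prod_eq_mul_prod_sdiff_singleton_of_mem (Finset.mem_univ i)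
          (fun j => (α y' ∘ Tuple.sort (α y')) j.succ - (α y' ∘ Tuple.sort (α y')) j.castSucc)]
        have hrest : ∏ j ∈ Finset.univ \ {i},
            ((α y' ∘ Tuple.sort (α y')) j.succ - (α y' ∘ Tuple.sort (α y')) j.castSucc)
            ≤ C ^ (N - 1) := by
          have hcard : (Finset.univ \ {i} : Finset (Fin N)).card = N - 1 := by
            rw [Finset.card_sdiff_of_subset (Finset.singleton_subset_iff.mpr (Finset.mem_univ i))]
            simp
          calc ∏ j ∈ Finset.univ \ {i},
              ((α y' ∘ Tuple.sort (α y')) j.succ - (α y' ∘ Tuple.sort (α y')) j.castSucc)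
              ≤ ∏ _j ∈ Finset.univ \ {i}, C :=
                Finset.prod_le_prod (fun j _ => hgap0 j) (fun j _ => hgapC j)
            _ = C ^ (N - 1) := by rw [Finset.prod_const, hcard]
        exact mul_le_mul hi hrest
          (Finset.prod_nonneg fun j _ => hgap0 j) (abs_nonneg _)
      · rw [hΨ y', if_neg hinj']
        simp only [abs_zero]
        positivity
    have htends : Filter.Tendsto (fun y' => |α y' a - α y' b| * C ^ (N - 1)) (𝓝 y) (𝓝 0) := by
      have : Filter.Tendsto (fun y' => |α y' a - α y' b| * C ^ (N - 1)) (𝓝 y)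
          (𝓝 (|α y a - α y b| * C ^ (N - 1))) := by
        apply ContinuousAt.mul _ continuousAt_const
        exact (((continuous_apply a).comp hα).sub ((continuous_apply b).comp hα)).abs.continuousAt
      simpa [hab] using this
    rw [tendsto_zero_iff_abs_tendsto_zero]
    exact squeeze_zero' (Filter.Eventually.of_forall fun _ => abs_nonneg _) hbound htends
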